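/- Let L : ℕ → ℝ with L_n ≥ 1 for all n and B_N = Σ_{n=0}^N L_n. Assume: (i) there exist c > 1, N₀ with B_{2N} ≤ c·B_N for all N > N₀; (ii) B_N ∼ N^{d_H} with 2 ≤ d_H < 4; (iii) η is a sequence of functions on (0,1), each differentiable with η_n′(x) ≤ 0, satisfying the recursion η_n(x) = (η_{n+1}(x) + 1/L_n)/(1 + x·L_n·η_{n+1}(x)) and 1/L_n ≤ η_n(x) ≤ x^{−1/2} for all n, x; (iv) for every sufficiently large k there exists x_k ∈ (0,1) with x_k·F_{k−1}(x_k) = 1, and x_k → 0 as k → ∞; (v) |η_0′(x)| ∼ x^{−2+d_s/2} as x → 0 for some real d_s. Then d_s ≤ d_H. -/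

import Mathlib

/-- `X_N ∼ N^a`: there are constants `0 < c₁ ≤ c₂`, `c₁' ≤ c₂'` and `N₀` with
`c₁ N^a (log N)^{c₁'} ≤ X_N ≤ c₂ N^a (log N)^{c₂'}` for all `N > N₀`. -/
def NAsymp (X : ℕ → ℝ) (a : ℝ) : Prop :=
  ∃ c₁ c₂ c₁' c₂' : ℝ, ∃ N₀ : ℕ, 0 < c₁ ∧ c₁ ≤ c₂ ∧ c₁' ≤ c₂' ∧
    ∀ N : ℕ, N₀ < N →
      c₁ * (N:ℝ)^a * (Real.log N)^c₁' ≤ X N ∧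
      X N ≤ c₂ * (N:ℝ)^a * (Real.log N)^c₂'

/-- `f(x) ∼ x^a` as `x → 0`: there are constants `0 < c₁ ≤ c₂`, `c₁' ≤ c₂'` and
`x₀ ∈ (0,1)` with `c₁ x^a (log(1/x))^{c₁'} ≤ f(x) ≤ c₂ x^a (log(1/x))^{c₂'}`
for all `0 < x < x₀`. -/
def ZeroAsymp (f : ℝ → ℝ) (a : ℝ) : Prop :=
  ∃ c₁ c₂ c₁' c₂' x₀ : ℝ, 0 < c₁ ∧ c₁ ≤ c₂ ∧ c₁' ≤ c₂' ∧ 0 < x₀ ∧ x₀ < 1 ∧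
    ∀ x : ℝ, 0 < x → x < x₀ →
      c₁ * x^a * (Real.log (1/x))^c₁' ≤ f x ∧
      f x ≤ c₂ * x^a * (Real.log (1/x))^c₂'

set_option maxHeartbeats 1000000

/-- Theorem 6 of the paper: for a multigraph on the half line with volume doubling,
Hausdorff dimension `2 ≤ d_H < 4`, and spectral dimension `d_s` (in the sense of
`|η_0'(x)| ∼ x^{-2+d_s/2}`), one has `d_s ≤ d_H`. -/
theorem stmt_11 (L : ℕ → ℝ) (hL : ∀ n : ℕ, 1 ≤ L n)
    (c : ℝ) (hc : 1 < c) (N₀ : ℕ)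
    (hdbl : ∀ N : ℕ, N₀ < N →
      (∑ n ∈ Finset.range (2*N+1), L n) ≤ c * ∑ n ∈ Finset.range (N+1), L n)
    (dH : ℝ) (hdH2 : 2 ≤ dH) (hdH4 : dH < 4)
    (hB : NAsymp (fun N => ∑ n ∈ Finset.range (N+1), L n) dH)
    (η η' : ℕ → ℝ → ℝ)
    (hderiv : ∀ (n : ℕ), ∀ x ∈ Set.Ioo (0:ℝ) 1, HasDerivAt (η n) (η' n x) x)
    (hmono : ∀ (n : ℕ), ∀ x ∈ Set.Ioo (0:ℝ) 1, η' n x ≤ 0)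
    (hrec : ∀ (n : ℕ), ∀ x ∈ Set.Ioo (0:ℝ) 1,
      η n x = (η (n+1) x + 1 / L n) / (1 + x * L n * η (n+1) x))
    (hbnd : ∀ (n : ℕ), ∀ x ∈ Set.Ioo (0:ℝ) 1,
      1 / L n ≤ η n x ∧ η n x ≤ x ^ (-(1:ℝ)/2))
    (xs : ℕ → ℝ) (K : ℕ)
    (hxs : ∀ k : ℕ, K ≤ k → xs k ∈ Set.Ioo (0:ℝ) 1 ∧
      xs k * ∑ j ∈ Finset.range k, L j * η (j+1) (xs k) = 1)
    (hxs0 : Filter.Tendsto xs Filter.atTop (nhds 0))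
    (ds : ℝ) (hds : ZeroAsymp (fun x => |η' 0 x|) (-2 + ds/2)) :
    ds ≤ dH := by
  by_contra hcon
  push_neg at hcon
  classical
  obtain ⟨b₁, b₂, b₁', b₂', N₂, hb₁, hb₁₂, hb'', hNB⟩ := hB
  obtain ⟨a₁, a₂, a₁', a₂', x₀, ha₁, ha₁₂, ha'', hx₀, hx₀1, hAs⟩ := hds
  have hcpos : (0:ℝ) < c := lt_trans one_pos hc
  have hb₂ : (0:ℝ) < b₂ := lt_of_lt_of_le hb₁ hb₁₂
  have ha₂ : (0:ℝ) < a₂ := lt_of_lt_of_le ha₁ ha₁₂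
  set ε : ℝ := (ds - dH)/2 with hεdef
  have hε : 0 < ε := by rw [hεdef]; linarith
  set C₅ : ℝ := 64 * (c * Real.exp 1) with hC₅def
  have hC₅ : 0 < C₅ := by rw [hC₅def]; positivity
  set q : ℝ := max b₂' 0 with hqdef
  have hq : 0 ≤ q := le_max_right _ _
  set C₇ : ℝ := b₂ * C₅ ^ (dH/2) with hC₇def
  have hC₇ : 0 < C₇ := mul_pos hb₂ (Real.rpow_pos_of_pos hC₅ _)
  set r : ℝ := a₂' + q with hrdef
  set rp : ℝ := max r 0 with hrpdef
  have hrp : 0 ≤ rp := le_max_right _ _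
  set δ : ℝ := ε / (2*(rp+1)) with hδdef
  have hδ : 0 < δ := div_pos hε (by linarith)
  set C₈ : ℝ := 8 * a₂ * C₇ / δ ^ rp with hC₈def
  have hC₈ : 0 < C₈ := div_pos (by positivity) (Real.rpow_pos_of_pos hδ _)
  set γ : ℝ := (Real.exp (-2) / (2*C₈)) ^ (2/ε) with hγdef
  have hγ : 0 < γ := Real.rpow_pos_of_pos (by positivity) _
  set β : ℝ := min x₀ (min (Real.exp (-1)) γ) with hβdef
  have hβ : 0 < β := lt_min hx₀ (lt_min (Real.exp_pos _) hγ)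
  clear_value ε C₅ q C₇ r rp δ C₈ γ β
  -- choose a large k
  have hev1 : ∀ᶠ k in Filter.atTop, xs k < β := hxs0.eventually_lt_const hβ
  have hev2 := Filter.eventually_ge_atTop (max (max K (2*N₀+2)) (max 8 (N₂+2)))
  have hev3 := Filter.eventually_ge_atTop (⌈2*C₅⌉₊)
  obtain ⟨k, hkβ, hkm, hkc⟩ := (hev1.and (hev2.and hev3)).exists
  rw [max_le_iff, max_le_iff, max_le_iff] at hkm
  obtain ⟨⟨hkK, hkN₀⟩, hk8, hkN₂⟩ := hkm
  have hkC₅ : 2*C₅ ≤ (k:ℝ) := Nat.ceil_le.mp hkc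
  obtain ⟨hxIoo, hxF⟩ := hxs k hkK
  set x := xs k with hxdef
  have hx0 : 0 < x := hxIoo.1
  have hx1 : x < 1 := hxIoo.2
  have hxmem : x ∈ Set.Ioo (0:ℝ) 1 := hxIoo
  have hkpos : (0:ℝ) < (k:ℝ) := by
    have : 0 < k := by omega
    exact_mod_cast this
  have hLpos : ∀ n, (0:ℝ) < L n := fun n => lt_of_lt_of_le one_pos (hL n)
  have hupos : ∀ n, 0 < η n x := fun n =>
    lt_of_lt_of_le (div_pos one_pos (hLpos n)) (hbnd n x hxmem).1
  have hann : ∀ j : ℕ, 0 ≤ L j * η (j+1) x := fun j =>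
    le_of_lt (mul_pos (hLpos j) (hupos (j+1)))
  set D : ℕ → ℝ := fun n => 1 + x * L n * η (n+1) x with hDdef
  clear_value D
  have hDpos : ∀ n, 0 < D n := by
    intro n
    have h1 := hLpos n
    have h2 := hupos (n+1)
    simp only [hDdef]
    nlinarith [mul_pos (mul_pos hx0 h1) h2]
  set S : ℝ := ∑ j ∈ Finset.range k, L j * η (j+1) x with hSdef
  set B : ℝ := ∑ j ∈ Finset.range k, L j with hBdef
  set P : ℝ := ∑ m ∈ Finset.range k, L m * (η (m+1) x)^2 with hPdef
  clear_value S B P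
  have hBpos : 0 < B := by
    rw [hBdef]
    exact Finset.sum_pos (fun i _ => hLpos i) ⟨0, Finset.mem_range.2 (by omega)⟩
  have hPnn : 0 ≤ P := by
    rw [hPdef]
    exact Finset.sum_nonneg (fun m _ => mul_nonneg (hLpos m).le (sq_nonneg _))
  have hpartial : ∀ m, m ≤ k → ∑ j ∈ Finset.range m, L j * η (j+1) x ≤ S := by
    intro m hm
    rw [hSdef]
    exact Finset.sum_le_sum_of_subset_of_nonneg (Finset.range_subset_range.2 hm)
      (fun i _ _ => hann i)
  have hterm : ∀ m, m < k → x * (L m * η (m+1) x) ≤ 1 := by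
    intro m hm
    have h1 : L m * η (m+1) x ≤ S := by
      rw [hSdef]
      exact Finset.single_le_sum (f := fun j => L j * η (j+1) x) (fun i _ => hann i)
        (Finset.mem_range.2 hm)
    calc x * (L m * η (m+1) x) ≤ x * S := mul_le_mul_of_nonneg_left h1 hx0.le
      _ = 1 := hxF
  have hD2 : ∀ m, m < k → D m ≤ 2 := by
    intro m hm
    have h := hterm m hm
    simp only [hDdef]
    nlinarith [h]
  -- derivative recursion
  have hTrec : ∀ n : ℕ, η' n x = (1-x)/(D n)^2 * η' (n+1) x
      - η n x * L n * η (n+1) x / D n := by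
    intro n
    have hu := hderiv (n+1) x hxmem
    have hid' : HasDerivAt (fun y : ℝ => y * L n) (L n) x := by
      simpa using (hasDerivAt_id x).mul_const (L n)
    have h2 : HasDerivAt (fun y => 1 + y * L n * η (n+1) y)
        (L n * η (n+1) x + x * L n * η' (n+1) x) x := by
      have h := (hid'.mul hu).const_add 1
      exact h
    have h1 : HasDerivAt (fun y => η (n+1) y + 1 / L n) (η' (n+1) x) x := hu.add_const _
    have hDne : (1 : ℝ) + x * L n * η (n+1) x ≠ 0 := by
      have := hDpos n
      simp only [hDdef] at this
      linarith
    have hdiv := h1.div h2 hDne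
    have heq : η n =ᶠ[nhds x]
        fun y => (η (n+1) y + 1 / L n) / (1 + y * L n * η (n+1) y) := by
      filter_upwards [Ioo_mem_nhds hx0 hx1] with y hy
      exact hrec n y hy
    have hder2 := hdiv.congr_of_eventuallyEq heq
    have hval := (hderiv n x hxmem).unique hder2
    rw [hval, hrec n x hxmem]
    have hLne : L n ≠ 0 := ne_of_gt (hLpos n)
    simp only [hDdef]
    field_simp
    ring
  set Q : ℕ → ℝ := fun n => ∏ j ∈ Finset.range n, ((1-x)/(D j)^2) with hQdef
  set t : ℕ → ℝ := fun n => η n x * L n * η (n+1) x / D n with htdef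
  clear_value Q t
  have hid : ∀ N : ℕ, -η' 0 x = (∑ m ∈ Finset.range N, Q m * t m) + Q N * (-η' N x) := by
    intro N
    induction N with
    | zero => simp [hQdef]
    | succ N ih =>
      have h1 : Q (N+1) = Q N * ((1-x)/(D N)^2) := by
        simp only [hQdef]
        rw [Finset.prod_range_succ]
      rw [Finset.sum_range_succ, h1, ih]
      simp only [htdef]
      linear_combination (-(Q N)) * hTrec N
  have hmono' : ∀ n, 0 ≤ -η' n x := fun n => neg_nonneg.2 (hmono n x hxmem)
  have htnn : ∀ n, 0 ≤ t n := by
    intro n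
    simp only [htdef]
    exact div_nonneg (mul_nonneg (mul_nonneg (hupos n).le (hLpos n).le) (hupos (n+1)).le)
      (hDpos n).le
  have hQnn : ∀ n, 0 ≤ Q n := by
    intro n
    simp only [hQdef]
    exact Finset.prod_nonneg (fun j _ => div_nonneg (by linarith) (sq_nonneg _))
  set Qlow : ℝ := (1-x)^k * Real.exp (-2) with hQlowdef
  clear_value Qlow
  have hQlownn : 0 ≤ Qlow := by
    rw [hQlowdef]
    exact mul_nonneg (pow_nonneg (by linarith) k) (Real.exp_pos _).le
  have hQlow : ∀ m, m ≤ k → Qlow ≤ Q m := by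
    intro m hm
    have hstep : ∀ j ∈ Finset.range m,
        (1-x) * Real.exp (-(2 * (x * (L j * η (j+1) x)))) ≤ (1-x)/(D j)^2 := by
      intro j _
      have hDle : D j ≤ Real.exp (x * (L j * η (j+1) x)) := by
        have h := Real.add_one_le_exp (x * (L j * η (j+1) x))
        simp only [hDdef]
        calc 1 + x * L j * η (j+1) x = x * (L j * η (j+1) x) + 1 := by ring
          _ ≤ Real.exp (x * (L j * η (j+1) x)) := h
      have hD2le : (D j)^2 ≤ Real.exp (2 * (x * (L j * η (j+1) x))) := by
        rw [two_mul, Real.exp_add, pow_two]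
        exact mul_le_mul hDle hDle (hDpos j).le (Real.exp_pos _).le
      rw [Real.exp_neg, ← div_eq_mul_inv,
        div_le_div_iff₀ (Real.exp_pos _) (pow_pos (hDpos j) 2)]
      exact mul_le_mul_of_nonneg_left hD2le (by linarith)
    have hsumneg : ∑ j ∈ Finset.range m, -(2 * (x * (L j * η (j+1) x)))
        = -(2 * (x * ∑ j ∈ Finset.range m, L j * η (j+1) x)) := by
      rw [Finset.mul_sum, Finset.mul_sum, Finset.sum_neg_distrib]
    calc Qlow ≤ (1-x)^m * Real.exp (-(2 * (x * ∑ j ∈ Finset.range m, L j * η (j+1) x))) := by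
          rw [hQlowdef]
          apply mul_le_mul
          · exact pow_le_pow_of_le_one (by linarith) (by linarith) hm
          · apply Real.exp_le_exp.2
            have h1 := hpartial m hm
            have h2 : x * (∑ j ∈ Finset.range m, L j * η (j+1) x) ≤ x * S :=
              mul_le_mul_of_nonneg_left h1 hx0.le
            rw [hxF] at h2
            linarith
          · exact (Real.exp_pos _).le
          · exact pow_nonneg (by linarith) m
      _ = ∏ j ∈ Finset.range m, ((1-x) * Real.exp (-(2 * (x * (L j * η (j+1) x))))) := by
          rw [Finset.prod_mul_distrib, Finset.prod_const, Finset.card_range,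
            ← Real.exp_sum, hsumneg]
      _ ≤ ∏ j ∈ Finset.range m, ((1-x)/(D j)^2) :=
          Finset.prod_le_prod (fun j _ => mul_nonneg (by linarith) (Real.exp_pos _).le) hstep
      _ = Q m := by simp [hQdef]
  -- lower bound each term
  have ht_low : ∀ m, m < k → L m * (η (m+1) x)^2 / 4 ≤ t m := by
    intro m hm
    have hden : 0 < 1 + x * L m * η (m+1) x := by
      have := hDpos m
      simpa [hDdef] using this
    have h1 : η (m+1) x / D m ≤ η m x := by
      rw [hrec m x hxmem]
      simp only [hDdef]
      exact (div_le_div_iff_of_pos_right hden).mpr (by linarith only [div_pos one_pos (hLpos m)])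
    have h2 : L m * (η (m+1) x)^2 / (D m)^2 ≤ t m := by
      simp only [htdef]
      have e : L m * (η (m+1) x)^2/(D m)^2 = (η (m+1) x / D m) * L m * η (m+1) x / D m := by
        ring
      rw [e]
      exact (div_le_div_iff_of_pos_right (hDpos m)).mpr
        (mul_le_mul_of_nonneg_right (mul_le_mul_of_nonneg_right h1 (hLpos m).le)
          (hupos (m+1)).le)
    have h3 : L m * (η (m+1) x)^2 / 4 ≤ L m * (η (m+1) x)^2/(D m)^2 := by
      rw [div_le_div_iff₀ (by norm_num) (pow_pos (hDpos m) 2)]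
      have hD4 : (D m)^2 ≤ 4 := by nlinarith only [hD2 m hm, (hDpos m).le]
      have h5 := mul_le_mul_of_nonneg_left hD4
        (mul_nonneg (hLpos m).le (sq_nonneg (η (m+1) x)))
      linarith only [h5]
    linarith only [h2, h3]
  -- Cauchy-Schwarz
  have hCS1 : 1 ≤ x^2 * B * P := by
    have hcs := Finset.sum_mul_sq_le_sq_mul_sq (Finset.range k)
      (fun m => Real.sqrt (L m)) (fun m => Real.sqrt (L m) * η (m+1) x)
    have e1 : ∀ m ∈ Finset.range k,
        Real.sqrt (L m) * (Real.sqrt (L m) * η (m+1) x) = L m * η (m+1) x := by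
      intro m _
      rw [← mul_assoc, Real.mul_self_sqrt (hLpos m).le]
    have e2 : ∀ m ∈ Finset.range k, (Real.sqrt (L m))^2 = L m := fun m _ =>
      Real.sq_sqrt (hLpos m).le
    have e3 : ∀ m ∈ Finset.range k,
        (Real.sqrt (L m) * η (m+1) x)^2 = L m * (η (m+1) x)^2 := by
      intro m _
      rw [mul_pow, Real.sq_sqrt (hLpos m).le]
    rw [Finset.sum_congr rfl e1, Finset.sum_congr rfl e2, Finset.sum_congr rfl e3,
      ← hSdef, ← hBdef, ← hPdef] at hcs
    have h1 : (x*S)^2 = 1 := by rw [hxF]; norm_num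
    have h2 := mul_le_mul_of_nonneg_left hcs (sq_nonneg x)
    nlinarith only [h2, h1]
  -- resistance lower bound for η
  have hres : ∀ j n : ℕ, n + j = k →
      (∑ m ∈ Finset.Ico n k, 1/L m) *
        Real.exp (-(x * ∑ m ∈ Finset.Ico n k, L m * η (m+1) x)) ≤ η n x := by
    intro j
    induction j with
    | zero =>
      intro n hn
      have hnk : n = k := by omega
      subst hnk
      simp [Finset.Ico_self]
      exact (hupos n).le
    | succ j ih =>
      intro n hn
      have hnk : n < k := by omega
      have hih := ih (n+1) (by omega)
      rw [Finset.sum_eq_sum_Ico_succ_bot hnk, Finset.sum_eq_sum_Ico_succ_bot hnk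
        (f := fun m => L m * η (m+1) x)]
      have hR'nn : 0 ≤ ∑ m ∈ Finset.Ico (n+1) k, 1/L m :=
        Finset.sum_nonneg fun m _ => (div_pos one_pos (hLpos m)).le
      have hS'nn : 0 ≤ ∑ m ∈ Finset.Ico (n+1) k, L m * η (m+1) x :=
        Finset.sum_nonneg fun m _ => hann m
      set R' : ℝ := ∑ m ∈ Finset.Ico (n+1) k, 1/L m with hR'def
      set S' : ℝ := ∑ m ∈ Finset.Ico (n+1) k, L m * η (m+1) x with hS'def
      clear_value R' S'
      have e1 : Real.exp (-(x * (L n * η (n+1) x + S')))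
          = Real.exp (-(x * (L n * η (n+1) x))) * Real.exp (-(x*S')) := by
        rw [← Real.exp_add]
        ring_nf
      have hDd : η n x = (η (n+1) x + 1/L n) / (1 + x * L n * η (n+1) x) := hrec n x hxmem
      have hDe : 1 + x * L n * η (n+1) x ≤ Real.exp (x * (L n * η (n+1) x)) := by
        calc 1 + x * L n * η (n+1) x = x * (L n * η (n+1) x) + 1 := by ring
          _ ≤ Real.exp (x * (L n * η (n+1) x)) := Real.add_one_le_exp _
      have hDpos' : 0 < 1 + x * L n * η (n+1) x := by
        have := hDpos n
        simpa [hDdef] using this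
      have hnumnn : 0 ≤ η (n+1) x + 1/L n := by
        have := hupos (n+1)
        have := div_pos one_pos (hLpos n)
        linarith
      have step1 : (η (n+1) x + 1/L n) * Real.exp (-(x * (L n * η (n+1) x))) ≤ η n x := by
        rw [hDd, Real.exp_neg, ← div_eq_mul_inv,
          div_le_div_iff₀ (Real.exp_pos _) hDpos']
        exact mul_le_mul_of_nonneg_left hDe hnumnn
      have hexp1 : (0:ℝ) < Real.exp (-(x * (L n * η (n+1) x))) := Real.exp_pos _
      have hexp3 : (0:ℝ) < Real.exp (-(x*S')) := Real.exp_pos _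
      have hexp2 : Real.exp (-(x*S')) ≤ 1 := by
        have hle : -(x*S') ≤ 0 := neg_nonpos.2 (mul_nonneg hx0.le hS'nn)
        calc Real.exp (-(x*S')) ≤ Real.exp 0 := Real.exp_le_exp.2 hle
          _ = 1 := Real.exp_zero
      have hihx : R' * Real.exp (-(x*S')) ≤ η (n+1) x := hih
      have step2 : (1/L n + R') * (Real.exp (-(x * (L n * η (n+1) x))) * Real.exp (-(x*S')))
          ≤ (η (n+1) x + 1/L n) * Real.exp (-(x * (L n * η (n+1) x))) := by
        have hA1 := mul_le_mul_of_nonneg_right hihx hexp1.le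
        have hxLn : (0:ℝ) ≤ 1/L n := (div_pos one_pos (hLpos n)).le
        have hA2 := mul_le_mul_of_nonneg_right
          (mul_le_mul_of_nonneg_left hexp2 hxLn) hexp1.le
        nlinarith only [hA1, hA2]
      calc (1/L n + R') * Real.exp (-(x * (L n * η (n+1) x + S')))
          = (1/L n + R') * (Real.exp (-(x * (L n * η (n+1) x))) * Real.exp (-(x*S'))) := by
            rw [e1]
        _ ≤ (η (n+1) x + 1/L n) * Real.exp (-(x * (L n * η (n+1) x))) := step2
        _ ≤ η n x := step1
  have hulow : ∀ n, n ≤ k → Real.exp (-1) * (∑ m ∈ Finset.Ico n k, 1/L m) ≤ η n x := by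
    intro n hn
    have h0 := hres (k - n) n (by omega)
    have hRnn : 0 ≤ ∑ m ∈ Finset.Ico n k, 1/L m :=
      Finset.sum_nonneg fun m _ => (div_pos one_pos (hLpos m)).le
    have hsub : ∑ m ∈ Finset.Ico n k, L m * η (m+1) x ≤ S := by
      rw [hSdef]
      refine Finset.sum_le_sum_of_subset_of_nonneg ?_ (fun i _ _ => hann i)
      intro i hi
      exact Finset.mem_range.2 (Finset.mem_Ico.1 hi).2
    have hxle : x * (∑ m ∈ Finset.Ico n k, L m * η (m+1) x) ≤ 1 := by
      have := mul_le_mul_of_nonneg_left hsub hx0.le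
      rw [hxF] at this
      exact this
    have hmon : Real.exp (-1) ≤ Real.exp (-(x * ∑ m ∈ Finset.Ico n k, L m * η (m+1) x)) :=
      Real.exp_le_exp.2 (by linarith only [hxle])
    calc Real.exp (-1) * (∑ m ∈ Finset.Ico n k, 1/L m)
        = (∑ m ∈ Finset.Ico n k, 1/L m) * Real.exp (-1) := by ring
      _ ≤ (∑ m ∈ Finset.Ico n k, 1/L m) *
            Real.exp (-(x * ∑ m ∈ Finset.Ico n k, L m * η (m+1) x)) :=
          mul_le_mul_of_nonneg_left hmon hRnn
      _ ≤ η n x := h0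
  -- volume estimate: x * k^2 ≤ C₅
  have hxk2 : x * (k:ℝ)^2 ≤ C₅ := by
    have hρnn : 0 ≤ ∑ m ∈ Finset.Ico (k/2+1) k, 1/L m :=
      Finset.sum_nonneg fun m _ => (div_pos one_pos (hLpos m)).le
    set ρ : ℝ := ∑ m ∈ Finset.Ico (k/2+1) k, 1/L m with hρdef
    set Bh : ℝ := ∑ j ∈ Finset.range (k/2+1), L j with hBhdef
    have hBhpos : 0 < Bh := by
      rw [hBhdef]
      exact Finset.sum_pos (fun i _ => hLpos i) ⟨0, Finset.mem_range.2 (by omega)⟩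
    clear_value ρ Bh
    -- Cauchy-Schwarz on the interval
    have hCS2 : ((k - k/2 - 1 : ℕ):ℝ)^2 ≤ B * ρ := by
      have hcs := Finset.sum_mul_sq_le_sq_mul_sq (Finset.Ico (k/2+1) k)
        (fun m => Real.sqrt (L m)) (fun m => Real.sqrt (1/L m))
      have e1 : ∀ m ∈ Finset.Ico (k/2+1) k,
          Real.sqrt (L m) * Real.sqrt (1/L m) = 1 := by
        intro m _
        rw [← Real.sqrt_mul (hLpos m).le, mul_one_div, div_self (ne_of_gt (hLpos m)),
          Real.sqrt_one]
      have e2 : ∀ m ∈ Finset.Ico (k/2+1) k, (Real.sqrt (L m))^2 = L m := fun m _ =>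
        Real.sq_sqrt (hLpos m).le
      have e3 : ∀ m ∈ Finset.Ico (k/2+1) k, (Real.sqrt (1/L m))^2 = 1/L m := fun m _ =>
        Real.sq_sqrt (div_pos one_pos (hLpos m)).le
      rw [Finset.sum_congr rfl e1, Finset.sum_congr rfl e2, Finset.sum_congr rfl e3,
        ← hρdef] at hcs
      rw [Finset.sum_const, Nat.card_Ico, nsmul_eq_mul, mul_one] at hcs
      have hsub : (∑ m ∈ Finset.Ico (k/2+1) k, L m) ≤ B := by
        rw [hBdef]
        refine Finset.sum_le_sum_of_subset_of_nonneg ?_ (fun i _ _ => (hLpos i).le)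
        intro i hi
        exact Finset.mem_range.2 (Finset.mem_Ico.1 hi).2
      have := mul_le_mul_of_nonneg_right hsub hρnn
      have hcast : ((k - (k/2+1) : ℕ):ℝ) = ((k - k/2 - 1 : ℕ):ℝ) := by norm_num [Nat.sub_sub]
      rw [hcast] at hcs
      calc ((k - k/2 - 1 : ℕ):ℝ)^2 ≤ (∑ m ∈ Finset.Ico (k/2+1) k, L m) * ρ := hcs
        _ ≤ B * ρ := this
    have hc4 : B ≤ c * Bh := by
      have h1 : B ≤ ∑ j ∈ Finset.range (2*(k/2)+1), L j := by
        rw [hBdef]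
        refine Finset.sum_le_sum_of_subset_of_nonneg ?_ (fun i _ _ => (hLpos i).le)
        exact Finset.range_subset_range.2 (by omega)
      have h2 := hdbl (k/2) (by omega)
      rw [← hBhdef] at h2
      exact le_trans h1 h2
    have hc3 : Real.exp (-1) * (Bh * ρ) ≤ S := by
      have hsub2 : ∑ j ∈ Finset.range (k/2+1), L j * η (j+1) x ≤ S :=
        hpartial (k/2+1) (by omega)
      have h2 : ∀ j ∈ Finset.range (k/2+1),
          L j * (Real.exp (-1) * ρ) ≤ L j * η (j+1) x := by
        intro j hj
        have hjk : j + 1 ≤ k := by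
          have := Finset.mem_range.1 hj
          omega
        have hρR : ρ ≤ ∑ m ∈ Finset.Ico (j+1) k, 1/L m := by
          rw [hρdef]
          refine Finset.sum_le_sum_of_subset_of_nonneg
            (Finset.Ico_subset_Ico ?_ le_rfl) (fun i _ _ => (div_pos one_pos (hLpos i)).le)
          have := Finset.mem_range.1 hj
          omega
        have hu1 := hulow (j+1) hjk
        have hu2 : Real.exp (-1) * ρ ≤ η (j+1) x :=
          le_trans (mul_le_mul_of_nonneg_left hρR (Real.exp_pos _).le) hu1
        exact mul_le_mul_of_nonneg_left hu2 (hLpos j).le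
      calc Real.exp (-1) * (Bh * ρ)
          = ∑ j ∈ Finset.range (k/2+1), L j * (Real.exp (-1) * ρ) := by
            rw [← Finset.sum_mul, ← hBhdef]
            ring
        _ ≤ ∑ j ∈ Finset.range (k/2+1), L j * η (j+1) x := Finset.sum_le_sum h2
        _ ≤ S := hsub2
    -- combine
    have h1' : x * (Real.exp (-1) * (Bh*ρ)) ≤ 1 := by
      have := mul_le_mul_of_nonneg_left hc3 hx0.le
      rw [hxF] at this
      exact this
    have hprodexp : Real.exp (-1) * Real.exp 1 = 1 := by
      rw [← Real.exp_add]
      norm_num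
    have hBhρnn : 0 ≤ Bh * ρ := mul_nonneg hBhpos.le hρnn
    have h2' : x * (Bh*ρ) ≤ Real.exp 1 := by
      have h3 := mul_le_mul_of_nonneg_right h1' (Real.exp_pos 1).le
      have h4 : x*(Bh*ρ)*(Real.exp (-1)*Real.exp 1) = x*(Bh*ρ) := by
        rw [hprodexp]
        ring
      linarith only [h3, h4]
    have hc1' : ((k - k/2 - 1 : ℕ):ℝ)^2 ≤ c * (Bh * ρ) := by
      calc ((k - k/2 - 1 : ℕ):ℝ)^2 ≤ B * ρ := hCS2
        _ ≤ (c*Bh)*ρ := mul_le_mul_of_nonneg_right hc4 hρnn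
        _ = c*(Bh*ρ) := by ring
    have h3' : x * ((k - k/2 - 1 : ℕ):ℝ)^2 ≤ c * Real.exp 1 := by
      calc x * ((k - k/2 - 1 : ℕ):ℝ)^2 ≤ x * (c*(Bh*ρ)) :=
            mul_le_mul_of_nonneg_left hc1' hx0.le
        _ = c * (x*(Bh*ρ)) := by ring
        _ ≤ c * Real.exp 1 := mul_le_mul_of_nonneg_left h2' hcpos.le
    have hn8 : (k:ℝ) ≤ 8 * ((k - k/2 - 1 : ℕ):ℝ) := by
      have h : k ≤ 8 * (k - k/2 - 1) := by omega
      calc (k:ℝ) ≤ ((8 * (k - k/2 - 1) : ℕ):ℝ) := by exact_mod_cast h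
        _ = 8 * ((k - k/2 - 1 : ℕ):ℝ) := by push_cast; ring
    have hk2' : (k:ℝ)^2 ≤ 64 * ((k - k/2 - 1 : ℕ):ℝ)^2 := by
      nlinarith only [hn8, (by positivity : (0:ℝ) ≤ ((k - k/2 - 1 : ℕ):ℝ)), hkpos.le]
    calc x * (k:ℝ)^2 ≤ x * (64*((k - k/2 - 1 : ℕ):ℝ)^2) :=
          mul_le_mul_of_nonneg_left hk2' hx0.le
      _ = 64 * (x * ((k - k/2 - 1 : ℕ):ℝ)^2) := by ring
      _ ≤ 64 * (c*Real.exp 1) := mul_le_mul_of_nonneg_left h3' (by norm_num)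
      _ = C₅ := by rw [hC₅def]
  have hkx : x * (k:ℝ) ≤ 1/2 := by
    nlinarith only [hxk2, hC₅, hkC₅,
      mul_nonneg (mul_nonneg hx0.le hkpos.le) (by linarith only [hkC₅, hC₅] : (0:ℝ) ≤ (k:ℝ) - 2*C₅)]
  have hbern : (1:ℝ)/2 ≤ (1-x)^k := by
    have h := one_add_mul_le_pow (a := -x) (by linarith) k
    have e : (1 + -x) = 1 - x := by ring
    rw [e] at h
    have : (1:ℝ)/2 ≤ 1 + (k:ℝ)*(-x) := by nlinarith only [hkx]
    linarith only [h, this]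
  have hQlow2 : Real.exp (-2)/2 ≤ Qlow := by
    rw [hQlowdef]
    have := mul_le_mul_of_nonneg_right hbern (Real.exp_pos (-2)).le
    linarith only [this]
  -- main derivative lower bound
  have hmain1 : Qlow * (P/4) ≤ -η' 0 x := by
    have hidk := hid k
    have htail : 0 ≤ Q k * (-η' k x) := mul_nonneg (hQnn k) (hmono' k)
    have hsum1 : ∑ m ∈ Finset.range k, Qlow * t m ≤ ∑ m ∈ Finset.range k, Q m * t m :=
      Finset.sum_le_sum (fun m hm =>
        mul_le_mul_of_nonneg_right (hQlow m (le_of_lt (Finset.mem_range.1 hm))) (htnn m))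
    have hsum2 : ∑ m ∈ Finset.range k, Qlow * (L m * (η (m+1) x)^2/4)
        ≤ ∑ m ∈ Finset.range k, Qlow * t m :=
      Finset.sum_le_sum (fun m hm =>
        mul_le_mul_of_nonneg_left (ht_low m (Finset.mem_range.1 hm)) hQlownn)
    have e : ∑ m ∈ Finset.range k, Qlow * (L m * (η (m+1) x)^2/4) = Qlow * (P/4) := by
      rw [← Finset.mul_sum, ← Finset.sum_div, ← hPdef]
    linarith only [hidk, htail, hsum1, hsum2, e]
  have hG1 : Real.exp (-2) ≤ 8 * (|η' 0 x| * (x^2 * B)) := by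
    have habs : -η' 0 x ≤ |η' 0 x| := neg_le_abs _
    have hx2B : (0:ℝ) < x^2 * B := mul_pos (pow_pos hx0 2) hBpos
    have sa := mul_le_mul_of_nonneg_right hmain1 hx2B.le
    have sc := mul_le_mul_of_nonneg_right hCS1 (by linarith only [hQlow2, Real.exp_pos (-2)] : (0:ℝ) ≤ Qlow/4)
    have sd := mul_le_mul_of_nonneg_right habs hx2B.le
    nlinarith only [sa, sc, sd, hQlow2, Real.exp_pos (-2), hx2B, hPnn]
  -- final comparison of exponents
  have hx_lt_x₀ : x < x₀ := lt_of_lt_of_le hkβ (by rw [hβdef]; exact min_le_left _ _)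
  have hx_lt_e : x < Real.exp (-1) := lt_of_lt_of_le hkβ
    (by rw [hβdef]; exact (min_le_right _ _).trans (min_le_left _ _))
  have hx_lt_γ : x < γ := lt_of_lt_of_le hkβ
    (by rw [hβdef]; exact (min_le_right _ _).trans (min_le_right _ _))
  set W : ℝ := Real.log (1/x) with hWdef
  have h1xpos : (0:ℝ) < 1/x := by positivity
  have hW1 : 1 ≤ W := by
    rw [hWdef, Real.le_log_iff_exp_le h1xpos, le_div_iff₀ hx0]
    calc Real.exp 1 * x ≤ Real.exp 1 * Real.exp (-1) :=
          mul_le_mul_of_nonneg_left hx_lt_e.le (Real.exp_pos 1).le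
      _ = 1 := by rw [← Real.exp_add]; norm_num
  clear_value W
  have hG2 : |η' 0 x| ≤ a₂ * x^(-2 + ds/2) * W^a₂' := by
    have h := (hAs x hx0 hx_lt_x₀).2
    rw [← hWdef] at h
    exact h
  -- NAsymp upper bound on B
  have hk1 : (1:ℕ) ≤ k := by omega
  have hk1cast : ((k-1:ℕ):ℝ) = (k:ℝ) - 1 := by
    rw [Nat.cast_sub hk1, Nat.cast_one]
  have hNB' : B ≤ b₂ * ((k:ℝ)-1)^dH * (Real.log ((k:ℝ)-1))^b₂' := by
    have h := (hNB (k-1) (by omega)).2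
    have hksub : k - 1 + 1 = k := by omega
    simp only [hksub] at h
    rw [← hBdef] at h
    rw [← hk1cast]
    exact h
  have hkm1pos : (0:ℝ) < (k:ℝ) - 1 := by
    have : (8:ℝ) ≤ (k:ℝ) := by exact_mod_cast hk8
    linarith
  have hlogk1 : 1 ≤ Real.log ((k:ℝ)-1) := by
    rw [Real.le_log_iff_exp_le hkm1pos]
    have h1 : Real.exp 1 < 2.7182818286 := Real.exp_one_lt_d9
    have : (8:ℝ) ≤ (k:ℝ) := by exact_mod_cast hk8
    nlinarith only [h1, this]
  have hxk2' : (k:ℝ)^2 ≤ C₅ / x := by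
    rw [le_div_iff₀ hx0]
    nlinarith only [hxk2]
  have hklogW : Real.log ((k:ℝ)-1) ≤ W := by
    have h1 : Real.log ((k:ℝ)-1) ≤ Real.log (k:ℝ) :=
      Real.log_le_log (by linarith) (by linarith)
    have h2 : (k:ℝ) ≤ 1/x := by
      rw [le_div_iff₀ hx0]
      nlinarith only [hkx]
    have h3 : Real.log (k:ℝ) ≤ Real.log (1/x) := Real.log_le_log hkpos h2
    rw [hWdef]
    linarith only [h1, h3]
  have hG3 : B ≤ C₇ * (x^(-(dH/2)) * W^q) := by
    have e2 : ((k:ℝ)-1)^dH ≤ C₅^(dH/2) * x^(-(dH/2)) := by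
      have s1 : ((k:ℝ)-1)^dH ≤ (k:ℝ)^dH :=
        Real.rpow_le_rpow (by linarith) (by linarith) (by linarith)
      have s2 : (k:ℝ)^dH = ((k:ℝ)^2)^(dH/2) := by
        rw [← Real.rpow_natCast (k:ℝ) 2, ← Real.rpow_mul (Nat.cast_nonneg k)]
        congr 1
        push_cast
        ring
      have s3 : ((k:ℝ)^2)^(dH/2) ≤ (C₅/x)^(dH/2) :=
        Real.rpow_le_rpow (by positivity) hxk2' (by linarith)
      have s4 : (C₅/x)^(dH/2) = C₅^(dH/2) * x^(-(dH/2)) := by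
        rw [Real.div_rpow hC₅.le hx0.le, Real.rpow_neg hx0.le, div_eq_mul_inv]
      calc ((k:ℝ)-1)^dH ≤ (k:ℝ)^dH := s1
        _ = ((k:ℝ)^2)^(dH/2) := s2
        _ ≤ (C₅/x)^(dH/2) := s3
        _ = C₅^(dH/2) * x^(-(dH/2)) := s4
    have e3 : (Real.log ((k:ℝ)-1))^b₂' ≤ W^q := by
      calc (Real.log ((k:ℝ)-1))^b₂' ≤ (Real.log ((k:ℝ)-1))^q :=
            Real.rpow_le_rpow_of_exponent_le hlogk1 (by rw [hqdef]; exact le_max_left _ _)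
        _ ≤ W^q := Real.rpow_le_rpow (by linarith) hklogW hq
    calc B ≤ b₂ * ((k:ℝ)-1)^dH * (Real.log ((k:ℝ)-1))^b₂' := hNB'
      _ ≤ (b₂ * (C₅^(dH/2) * x^(-(dH/2)))) * W^q := by
          apply mul_le_mul (mul_le_mul_of_nonneg_left e2 hb₂.le) e3
            (Real.rpow_nonneg (by linarith) _)
          positivity
      _ = C₇ * (x^(-(dH/2)) * W^q) := by rw [hC₇def]; ring
  -- combine G1, G2, G3
  have hx2R : x^(2:ℕ) = x^((2:ℝ)) := by
    rw [← Real.rpow_natCast x 2]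
    norm_num
  have hcomb : Real.exp (-2) ≤ 8 * a₂ * C₇ * (x^ε * W^r) := by
    have hBnn : (0:ℝ) ≤ B := hBpos.le
    have u1 : |η' 0 x| * (x^2 * B) ≤ (a₂ * x^(-2 + ds/2) * W^a₂') *
        (x^2 * (C₇ * (x^(-(dH/2)) * W^q))) := by
      apply mul_le_mul hG2 (mul_le_mul_of_nonneg_left hG3 (sq_nonneg x))
        (mul_nonneg (sq_nonneg x) hBnn)
      positivity
    have u3 : x^(-2 + ds/2) * x^((2:ℝ)) * x^(-(dH/2)) = x^ε := by
      rw [← Real.rpow_add hx0, ← Real.rpow_add hx0, hεdef]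
      congr 1
      ring
    have u4 : W^a₂' * W^q = W^r := by
      rw [← Real.rpow_add (by linarith : (0:ℝ) < W), hrdef]
    have u2 : (a₂ * x^(-2 + ds/2) * W^a₂') * (x^2 * (C₇ * (x^(-(dH/2)) * W^q)))
        = 8 * a₂ * C₇ * (x^ε * W^r) / 8 := by
      rw [hx2R, ← u3, ← u4]
      ring
    have := mul_le_mul_of_nonneg_left u1 (by norm_num : (0:ℝ) ≤ 8)
    rw [u2] at this
    linarith only [hG1, this]
  -- bound the log factor
  have hWr : W^r ≤ x^(-(ε/2)) / δ^rp := by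
    have w1 : W^r ≤ W^rp := Real.rpow_le_rpow_of_exponent_le hW1
      (by rw [hrpdef]; exact le_max_left _ _)
    have w2 : W ≤ x^(-δ)/δ := by
      have h := Real.log_le_rpow_div h1xpos.le hδ
      have e : (1/x)^δ = x^(-δ) := by
        rw [one_div, Real.inv_rpow hx0.le, ← Real.rpow_neg hx0.le]
      rw [hWdef]
      rw [e] at h
      exact h
    have w3 : W^rp ≤ (x^(-δ)/δ)^rp := Real.rpow_le_rpow (by linarith) w2 hrp
    have w4 : (x^(-δ)/δ)^rp = x^(-δ*rp)/δ^rp := by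
      rw [Real.div_rpow (Real.rpow_nonneg hx0.le _) hδ.le, ← Real.rpow_mul hx0.le]
    have w5 : x^(-δ*rp) ≤ x^(-(ε/2)) := by
      apply Real.rpow_le_rpow_of_exponent_ge hx0 hx1.le
      have hδrp : δ * rp ≤ ε/2 := by
        rw [hδdef, div_mul_eq_mul_div, div_le_div_iff₀ (by linarith) two_pos]
        nlinarith only [hε.le, hrp]
      linarith only [hδrp]
    have w6 : x^(-δ*rp)/δ^rp ≤ x^(-(ε/2))/δ^rp :=
      (div_le_div_iff_of_pos_right (Real.rpow_pos_of_pos hδ rp)).mpr w5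
    calc W^r ≤ W^rp := w1
      _ ≤ (x^(-δ)/δ)^rp := w3
      _ = x^(-δ*rp)/δ^rp := w4
      _ ≤ x^(-(ε/2))/δ^rp := w6
  -- conclude
  have hfin : Real.exp (-2) ≤ C₈ * x^(ε/2) := by
    have hpos8 : (0:ℝ) ≤ 8 * a₂ * C₇ * x^ε := by positivity
    have step := mul_le_mul_of_nonneg_left hWr (by positivity : (0:ℝ) ≤ 8 * a₂ * C₇)
    have e1 : 8 * a₂ * C₇ * (x^ε * W^r) = (8 * a₂ * C₇) * W^r * x^ε := by ring
    have e2 : (8 * a₂ * C₇) * (x^(-(ε/2)) / δ^rp) * x^ε = C₈ * (x^(-(ε/2)) * x^ε) := by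
      rw [hC₈def]
      ring
    have e3 : x^(-(ε/2)) * x^ε = x^(ε/2) := by
      rw [← Real.rpow_add hx0]
      congr 1
      ring
    calc Real.exp (-2) ≤ 8 * a₂ * C₇ * (x^ε * W^r) := hcomb
      _ = (8 * a₂ * C₇) * W^r * x^ε := e1
      _ ≤ (8 * a₂ * C₇) * (x^(-(ε/2)) / δ^rp) * x^ε := by
          exact mul_le_mul_of_nonneg_right step (Real.rpow_nonneg hx0.le ε)
      _ = C₈ * (x^(-(ε/2)) * x^ε) := e2
      _ = C₈ * x^(ε/2) := by rw [e3]
  have hxsm : x^(ε/2) < Real.exp (-2)/(2*C₈) := by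
    have h1 : x^(ε/2) < γ^(ε/2) :=
      Real.rpow_lt_rpow hx0.le hx_lt_γ (by positivity)
    have h2 : γ^(ε/2) = Real.exp (-2)/(2*C₈) := by
      rw [hγdef, ← Real.rpow_mul (by positivity : (0:ℝ) ≤ Real.exp (-2)/(2*C₈))]
      rw [show (2/ε)*(ε/2) = 1 by field_simp]
      exact Real.rpow_one _
    rwa [h2] at h1
  have hlt := mul_lt_mul_of_pos_left hxsm hC₈
  have heq : C₈ * (Real.exp (-2)/(2*C₈)) = Real.exp (-2)/2 := by
    field_simp
  rw [heq] at hlt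
  have := Real.exp_pos (-2)
  linarith only [hfin, hlt, this]
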